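/- Let R be an EM-G-graded commutative ring and S ⊆ h(R) a multiplicatively closed subset of homogeneous elements. Then the localization S^{-1}R, with the induced G-grading (S^{-1}R)_λ = {a/s : s ∈ S, a homogeneous, λ = deg(s)^{-1}·deg(a)}, is an EM-G-graded ring. -/

import Mathlib

open Polynomial

/-- `R` (with grading `𝒜`) is an EM-`G`-graded ring. -/
def IsEMGGraded {G R : Type*} [CommRing R] (𝒜 : G → AddSubgroup R) : Prop :=
  ∀ f : R[X], f ≠ 0 → (∃ σ : G, ∀ i, f.coeff i ∈ 𝒜 σ) → f ∉ nonZeroDivisors R[X] →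
    ∃ (c : R) (g : R[X]), c ∉ nonZeroDivisors R ∧ g ∈ nonZeroDivisors R[X] ∧ f = C c * g

/-- Combine annihilators over a finite set of indices into a single annihilator. -/
lemma aux_annih {R : Type*} [CommRing R] (S : Submonoid R) (K : Finset ℕ)
    (c : ℕ → R) (b : R) (h : ∀ i ∈ K, ∃ m : S, (m : R) * (b * c i) = 0) :
    ∃ V : S, ∀ i ∈ K, ((V : R) * b) * c i = 0 := by
  classical
  choose m hm using h
  set m' : ℕ → S := fun i => if h : i ∈ K then m i h else 1 with hm'
  refine ⟨∏ i ∈ K, m' i, fun i hi => ?_⟩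
  have h1 : ((∏ j ∈ K, m' j : S) : R) = ∏ j ∈ K, ((m' j : R)) :=
    Submonoid.coe_finset_prod S m' K
  have h2 : ((m' i : R)) * (b * c i) = 0 := by
    simp only [hm', dif_pos hi]; exact hm i hi
  have h3 : (∏ j ∈ K, ((m' j : R))) = (∏ j ∈ K.erase i, ((m' j : R))) * (m' i : R) :=
    (Finset.prod_erase_mul _ _ hi).symm
  have h4 : (∏ j ∈ K.erase i, ((m' j : R))) * (m' i : R) * b * c i
      = (∏ j ∈ K.erase i, ((m' j : R))) * (((m' i : R)) * (b * c i)) := by ring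
  rw [h1, h3, h4, h2, mul_zero]

/-- If `R` is EM-`G`-graded and `S ⊆ h(R)` is a multiplicatively closed set
of homogeneous elements, then `S⁻¹R` with the induced grading
`(S⁻¹R)_λ = {a/s : λ = deg(s)⁻¹ deg(a)}` is an EM-`G`-graded ring: every nonzero
homogeneous zero-divisor polynomial over `S⁻¹R` has an annihilating content. -/
theorem stmt_13 {G R : Type*} [AddGroup G] [DecidableEq G] [CommRing R]
    (𝒜 : G → AddSubgroup R) [GradedRing 𝒜] (hEM : IsEMGGraded 𝒜)
    (S : Submonoid R) (hS : ∀ s ∈ S, ∃ σ : G, s ∈ 𝒜 σ) :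
    ∀ f : Polynomial (Localization S), f ≠ 0 →
      (∃ lam : G, ∀ i, ∃ (a : R) (σ τ : G) (s : S),
        a ∈ 𝒜 σ ∧ (s : R) ∈ 𝒜 τ ∧ lam = -τ + σ ∧ f.coeff i = Localization.mk a s) →
      f ∉ nonZeroDivisors (Polynomial (Localization S)) →
      ∃ (c : Localization S) (g : Polynomial (Localization S)),
        c ∉ nonZeroDivisors (Localization S) ∧
        g ∈ nonZeroDivisors (Polynomial (Localization S)) ∧
        f = C c * g := by
  classical
  intro f hf0 hhom hfz
  obtain ⟨lam, hl⟩ := hhom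
  choose a σ τ s ha hs hlam hcoe using hl
  set φ := algebraMap R (Localization S) with hφ
  set K := f.support with hK
  set e : ℕ → R := fun i => ∏ j ∈ K.erase i, (s j : R) with he
  set t : R := ∏ j ∈ K, (s j : R) with ht
  have htS : t ∈ S := Submonoid.prod_mem S (fun j _ => (s j).2)
  have heS : ∀ i, e i ∈ S := fun i => Submonoid.prod_mem S (fun j _ => (s j).2)
  set c : ℕ → R := fun i => a i * e i with hc
  set F : R[X] := ∑ i ∈ K, monomial i (c i) with hF
  have hFco : ∀ i, F.coeff i = if i ∈ K then c i else 0 := by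
    intro i
    rw [hF, Polynomial.finset_sum_coeff]
    simp [Polynomial.coeff_monomial]
  have hts : ∀ i ∈ K, (s i : R) * e i = t :=
    fun i hi => Finset.mul_prod_erase K (fun j => (s j : R)) hi
  have hsc : ∀ i ∈ K, (s i : R) * c i = a i * t := by
    intro i hi
    rw [hc]
    simp only
    rw [← hts i hi]; ring
  have hunit : ∀ (y : S), IsUnit (φ y) := IsLocalization.map_units _
  -- the key coefficientwise identity
  have hco : ∀ i, φ (F.coeff i) = φ t * f.coeff i := by
    intro i
    by_cases hi : i ∈ K
    · rw [hFco, if_pos hi, hcoe i, Localization.mk_eq_mk'_apply,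
        IsLocalization.mul_mk'_eq_mk'_of_mul, eq_comm, IsLocalization.mk'_eq_iff_eq_mul,
        ← map_mul]
      congr 1
      rw [hc]
      simp only
      rw [← hts i hi]; ring
    · have h1 : F.coeff i = 0 := by rw [hFco, if_neg hi]
      have h2 : f.coeff i = 0 := Polynomial.notMem_support_iff.mp (by rwa [← hK])
      rw [h1, h2, map_zero, mul_zero]
  -- homogeneity of F
  obtain ⟨T, hT⟩ := hS t htS
  have hhomF : ∀ i, F.coeff i ∈ 𝒜 (lam + T) := by
    intro i
    rw [hFco]
    split_ifs with hi
    · obtain ⟨μ, hμ⟩ := hS (e i) (heS i)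
      have hci : c i ∈ 𝒜 (σ i + μ) := SetLike.mul_mem_graded (ha i) hμ
      have h1 : (s i : R) * c i ∈ 𝒜 (τ i + (σ i + μ)) := SetLike.mul_mem_graded (hs i) hci
      have h2 : (s i : R) * c i ∈ 𝒜 (σ i + T) := by
        rw [hsc i hi]; exact SetLike.mul_mem_graded (ha i) hT
      have hne : (s i : R) * c i ≠ 0 := by
        rw [hsc i hi]
        intro h0
        have hfi : f.coeff i ≠ 0 := Polynomial.mem_support_iff.mp hi
        apply hfi
        rw [hcoe i, Localization.mk_eq_mk'_apply, IsLocalization.mk'_eq_zero_iff]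
        exact ⟨⟨t, htS⟩, by rw [mul_comm]; exact h0⟩
      have hdeg : τ i + (σ i + μ) = σ i + T := DirectSum.degree_eq_of_mem_mem 𝒜 h1 h2 hne
      have hfin : σ i + μ = lam + T := by
        rw [hlam i, add_assoc, ← hdeg, neg_add_cancel_left]
      exact hfin ▸ hci
    · exact (𝒜 _).zero_mem
  -- F is nonzero
  obtain ⟨k, hk'⟩ : ∃ k, k ∈ K := Polynomial.support_nonempty.mpr hf0
  have hk : f.coeff k ≠ 0 := Polynomial.mem_support_iff.mp hk'
  have hF0 : F ≠ 0 := by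
    intro h0
    apply hk
    have h1 := hco k
    rw [h0, Polynomial.coeff_zero, map_zero] at h1
    exact ((IsUnit.mul_right_eq_zero (hunit ⟨t, htS⟩)).mp h1.symm)
  -- F is a zerodivisor
  obtain ⟨r, hr0, hrf⟩ := Polynomial.notMem_nonZeroDivisors_iff.mp hfz
  obtain ⟨b, u, hbu⟩ := IsLocalization.exists_mk'_eq S r
  have hrb : ∀ m : S, (m : R) * b ≠ 0 := by
    intro m hm
    apply hr0
    rw [← hbu, IsLocalization.mk'_eq_zero_iff]
    exact ⟨m, hm⟩
  have hann : ∀ i ∈ K, ∃ m : S, (m : R) * (b * c i) = 0 := by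
    intro i hi
    have h1 : r * f.coeff i = 0 := by
      have h2 := congrArg (fun p => Polynomial.coeff p i) hrf
      simpa [Polynomial.coeff_smul, smul_eq_mul] using h2
    have h2 : r * φ (c i) = 0 := by
      have h3 := hco i
      rw [hFco, if_pos hi] at h3
      rw [h3, mul_left_comm, h1, mul_zero]
    have h3 : φ (b * c i) = 0 := by
      have h4 : (r * φ (c i)) * φ u = 0 := by rw [h2, zero_mul]
      rw [← hbu, mul_right_comm, IsLocalization.mk'_spec, ← map_mul] at h4
      exact h4
    exact (IsLocalization.map_eq_zero_iff S (Localization S) _).mp h3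
  obtain ⟨V, hV⟩ := aux_annih S K c b hann
  have hVb0 : (V : R) * b ≠ 0 := hrb V
  have hFann : ((V : R) * b) • F = 0 := by
    ext n
    rw [Polynomial.coeff_smul, smul_eq_mul, Polynomial.coeff_zero, hFco]
    split_ifs with hn
    · exact hV n hn
    · exact mul_zero _
  have hFnz : F ∉ nonZeroDivisors R[X] :=
    Polynomial.notMem_nonZeroDivisors_iff.mpr ⟨_, hVb0, hFann⟩
  -- apply the EM property
  obtain ⟨c0, g, hc0, hg, hFeq⟩ := hEM F hF0 ⟨lam + T, hhomF⟩ hFnz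
  obtain ⟨tu, htu⟩ := hunit ⟨t, htS⟩
  refine ⟨φ c0 * ↑tu⁻¹, g.map φ, ?_, ?_, ?_⟩
  · -- φ c0 * tu⁻¹ is a zerodivisor
    have h5 : C ((V : R) * b * c0) * g = 0 := by
      rw [hFeq, Polynomial.smul_eq_C_mul, ← mul_assoc, ← Polynomial.C_mul] at hFann
      exact hFann
    have h6 : (V : R) * b * c0 = 0 :=
      Polynomial.C_eq_zero.mp (mem_nonZeroDivisors_iff_right.mp hg _ h5)
    have h7 : φ (b * c0) = 0 := by
      rw [IsLocalization.map_eq_zero_iff S (Localization S)]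
      exact ⟨V, by rw [← mul_assoc]; exact h6⟩
    have h8 : φ b ≠ 0 := by
      intro h9
      rcases (IsLocalization.map_eq_zero_iff S (Localization S) b).mp h9 with ⟨m, hm⟩
      exact hrb m hm
    intro hmem
    apply h8
    refine mem_nonZeroDivisors_iff_right.mp hmem (φ b) ?_
    rw [← mul_assoc, ← map_mul, h7, zero_mul]
  · -- g.map φ is regular
    rw [Polynomial.mem_nonZeroDivisors_iff]
    intro z hz
    obtain ⟨b', u', hbu'⟩ := IsLocalization.exists_mk'_eq S z
    have hz' : ∀ i ∈ Finset.range (g.natDegree + 1), ∃ m : S, (m : R) * (b' * g.coeff i) = 0 := by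
      intro i _
      have h1 : z * φ (g.coeff i) = 0 := by
        have h2 := congrArg (fun p => Polynomial.coeff p i) hz
        simpa [Polynomial.coeff_smul, Polynomial.coeff_map, smul_eq_mul] using h2
      have h2 : φ (b' * g.coeff i) = 0 := by
        have h4 : (z * φ (g.coeff i)) * φ u' = 0 := by rw [h1, zero_mul]
        rw [← hbu', mul_right_comm, IsLocalization.mk'_spec, ← map_mul] at h4
        exact h4
      exact (IsLocalization.map_eq_zero_iff S (Localization S) _).mp h2
    obtain ⟨W, hW⟩ := aux_annih S (Finset.range (g.natDegree + 1)) g.coeff b' hz'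
    have hWg : ((W : R) * b') • g = 0 := by
      ext n
      rw [Polynomial.coeff_smul, smul_eq_mul, Polynomial.coeff_zero]
      by_cases hn : n ∈ Finset.range (g.natDegree + 1)
      · exact hW n hn
      · have hd : g.natDegree < n := by
          simp only [Finset.mem_range] at hn; omega
        rw [Polynomial.coeff_eq_zero_of_natDegree_lt hd, mul_zero]
    have hWb' : (W : R) * b' = 0 := Polynomial.mem_nonZeroDivisors_iff.mp hg _ hWg
    rw [← hbu', IsLocalization.mk'_eq_zero_iff]
    exact ⟨W, hWb'⟩
  · -- the factorization
    have hmapF : F.map φ = C (φ t) * f := by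
      ext n
      rw [Polynomial.coeff_map, Polynomial.coeff_C_mul]
      exact hco n
    rw [hFeq, Polynomial.map_mul, Polynomial.map_C] at hmapF
    have h10 : C ((tu⁻¹ : (Localization S)ˣ) : Localization S) * (C (φ c0) * g.map φ)
        = C ((tu⁻¹ : (Localization S)ˣ) : Localization S) * (C (φ t) * f) := by rw [hmapF]
    rw [← mul_assoc, ← Polynomial.C_mul, ← mul_assoc, ← Polynomial.C_mul, ← htu,
      Units.inv_mul, Polynomial.C_1, one_mul] at h10
    rw [← h10, mul_comm ((tu⁻¹ : (Localization S)ˣ) : Localization S) (φ c0)]
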